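/- Let W be an r × r lower triangular matrix with positive diagonal entries, Ω = W W^T, and parametrize W by ω = v(W*) where W*_{ii} = log(W_{ii}) and W*_{ij} = W_{ij} for i ≠ j. Let D^W be the diagonal matrix of order r(r+1)/2 with diagonal v(J^W), where J^W is the r × r matrix with J^W_{ii} = W_{ii} and all off-diagonal entries equal to 1. Then for any fixed b ∈ ℝ^r, the gradient with respect to ω of the function ω ↦ (1/2) log|Ω| − (1/2) b^T Ω b equals D^W v(W^{−T} − b b^T W). -/

import Mathlib

open Matrix

/-- The continuous linear map `v ↦ a ⬝ᵥ v`. -/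
noncomputable def dotCLM {ι : Type*} [Fintype ι] (a : ι → ℝ) : (ι → ℝ) →L[ℝ] ℝ :=
  LinearMap.toContinuousLinearMap
    { toFun := fun v => a ⬝ᵥ v
      map_add' := fun x y => dotProduct_add a x y
      map_smul' := fun c x => by simp [dotProduct_smul] }

/-- Index set of the lower-triangular positions of an `r × r` matrix
(the index set of the half-vectorization `v(·)`). -/
abbrev LTIdx (r : ℕ) := {q : Fin r × Fin r // q.2 ≤ q.1}

/-- The log-Cholesky parametrization `ω ↦ W`: `W` is lower triangular with
`W_{ii} = exp(ω_{ii})` and `W_{ij} = ω_{ij}` for `j < i`. -/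
noncomputable def Wof {r : ℕ} (ω : LTIdx r → ℝ) : Matrix (Fin r) (Fin r) ℝ :=
  fun i j => if h : j ≤ i then
      (if i = j then Real.exp (ω ⟨(i, j), h⟩) else ω ⟨(i, j), h⟩) else 0

namespace GradAux

variable {r : ℕ}

lemma dotCLM_apply {ι : Type*} [Fintype ι] (a v : ι → ℝ) : dotCLM a v = a ⬝ᵥ v := rfl

/-- diagonal index -/
def dIdx (i : Fin r) : LTIdx r := ⟨(i, i), le_refl i⟩

lemma Wof_lower (ω : LTIdx r → ℝ) : (Wof ω).BlockTriangular OrderDual.toDual := by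
  intro i j hij
  have h : (i : Fin r) < j := hij
  simp only [Wof]
  rw [dif_neg (not_le.mpr h)]

lemma Wof_diag (ω : LTIdx r → ℝ) (i : Fin r) : Wof ω i i = Real.exp (ω (dIdx i)) := by
  simp [Wof, dIdx]

lemma det_Wof (ω : LTIdx r → ℝ) :
    (Wof ω).det = Real.exp (∑ i, ω (dIdx i)) := by
  rw [Matrix.det_of_lowerTriangular _ (Wof_lower ω)]
  rw [show ∏ i, Wof ω i i = ∏ i, Real.exp (ω (dIdx i)) from
    Finset.prod_congr rfl fun i _ => Wof_diag ω i]
  exact (Real.exp_sum _ _).symm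

lemma det_Wof_ne (ω : LTIdx r → ℝ) : (Wof ω).det ≠ 0 := by
  rw [det_Wof]; exact Real.exp_ne_zero _

lemma Winv_lower (ω : LTIdx r → ℝ) : ((Wof ω)⁻¹).BlockTriangular OrderDual.toDual := by
  haveI : Invertible (Wof ω) := (Wof ω).invertibleOfIsUnitDet (det_Wof_ne ω).isUnit
  exact Matrix.blockTriangular_inv_of_blockTriangular (Wof_lower ω)

lemma Winv_mul_diag (ω : LTIdx r → ℝ) (i : Fin r) :
    Wof ω i i * (Wof ω)⁻¹ i i = 1 := by
  have h := Matrix.mul_nonsing_inv (Wof ω) (det_Wof_ne ω).isUnit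
  have h2 := congrFun (congrFun h i) i
  simp only [Matrix.mul_apply, Matrix.one_apply_eq] at h2
  have h3 : ∑ k, Wof ω i k * (Wof ω)⁻¹ k i = Wof ω i i * (Wof ω)⁻¹ i i := by
    refine Finset.sum_eq_single i ?_ ?_
    · intro k _ hk
      rcases lt_or_gt_of_ne hk with hlt | hgt
      · have hz : (Wof ω)⁻¹ k i = 0 :=
          Winv_lower ω (show OrderDual.toDual i < OrderDual.toDual k from hlt)
        rw [hz, mul_zero]
      · have hz : Wof ω i k = 0 :=
          Wof_lower ω (show OrderDual.toDual k < OrderDual.toDual i from hgt)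
        rw [hz, zero_mul]
    · intro hi; exact absurd (Finset.mem_univ i) hi
  rw [← h3]
  exact h2

/-- `c j = (Wᵀ b)_j` -/
noncomputable def cfun (b : Fin r → ℝ) (ω : LTIdx r → ℝ) (j : Fin r) : ℝ :=
  ∑ k, b k * Wof ω k j

lemma quad_eq (b : Fin r → ℝ) (ω : LTIdx r → ℝ) :
    b ⬝ᵥ ((Wof ω * (Wof ω)ᵀ) *ᵥ b) = ∑ j, cfun b ω j * cfun b ω j := by
  rw [← Matrix.mulVec_mulVec, Matrix.dotProduct_mulVec, ← Matrix.mulVec_transpose]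
  have hc : (Wof ω)ᵀ *ᵥ b = fun j => cfun b ω j := by
    funext j
    simp [Matrix.mulVec, dotProduct, cfun, mul_comm]
  rw [hc]
  rfl

lemma sum_LTIdx (f : LTIdx r → ℝ) :
    ∑ q : LTIdx r, f q
      = ∑ i : Fin r, ∑ j : Fin r, if h : j ≤ i then f ⟨(i, j), h⟩ else 0 := by
  classical
  set g : Fin r × Fin r → ℝ := fun p => if h : p.2 ≤ p.1 then f ⟨p, h⟩ else 0 with hg
  have h1 : ∑ q : LTIdx r, f q = ∑ q : LTIdx r, g (q : Fin r × Fin r) := by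
    refine Finset.sum_congr rfl fun q _ => ?_
    simp [hg, dif_pos q.2]
  have h2 : ∑ p ∈ Finset.univ.filter (fun p : Fin r × Fin r => p.2 ≤ p.1), g p
      = ∑ q : LTIdx r, g (q : Fin r × Fin r) :=
    Finset.sum_subtype _ (by simp) g
  have h3 : ∑ p ∈ Finset.univ.filter (fun p : Fin r × Fin r => p.2 ≤ p.1), g p
      = ∑ p : Fin r × Fin r, g p := by
    rw [Finset.sum_filter]
    refine Finset.sum_congr rfl fun p _ => ?_
    by_cases h : p.2 ≤ p.1 <;> simp [hg, h]
  rw [h1, ← h2, h3, Fintype.sum_prod_type]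

/-- projection as a CLM -/
noncomputable def projQ (q : LTIdx r) : (LTIdx r → ℝ) →L[ℝ] ℝ :=
  ContinuousLinearMap.proj q

@[simp] lemma projQ_apply (q : LTIdx r) (v : LTIdx r → ℝ) : projQ q v = v q := rfl

lemma hasFDeriv_proj (q : LTIdx r) (ω0 : LTIdx r → ℝ) :
    HasFDerivAt (fun ω : LTIdx r → ℝ => ω q) (projQ q) ω0 :=
  (projQ q).hasFDerivAt

/-- derivative of the entry map `ω ↦ (Wof ω) i j` -/
noncomputable def entryD (ω0 : LTIdx r → ℝ) (i j : Fin r) : (LTIdx r → ℝ) →L[ℝ] ℝ :=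
  if h : j ≤ i then
    (if i = j then Wof ω0 i i • projQ ⟨(i, j), h⟩
     else projQ ⟨(i, j), h⟩)
  else 0

lemma hasFDeriv_entry (ω0 : LTIdx r → ℝ) (i j : Fin r) :
    HasFDerivAt (fun ω => Wof ω i j) (entryD ω0 i j) ω0 := by
  unfold Wof entryD
  by_cases h : j ≤ i
  · simp only [dif_pos h]
    by_cases hij : i = j
    · subst hij
      simp only [if_pos rfl]
      have hp := hasFDeriv_proj ⟨(i, i), h⟩ ω0
      have := (Real.hasDerivAt_exp (ω0 ⟨(i, i), h⟩)).comp_hasFDerivAt ω0 hp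
      simpa [Wof_diag, dIdx, Function.comp_def] using this
    · simp only [if_neg hij]
      exact (projQ ⟨(i, j), h⟩).hasFDerivAt
  · simp only [dif_neg h]
    exact hasFDerivAt_const 0 ω0

noncomputable def cD (b : Fin r → ℝ) (ω0 : LTIdx r → ℝ) (j : Fin r) :
    (LTIdx r → ℝ) →L[ℝ] ℝ :=
  ∑ i, b i • entryD ω0 i j

lemma hasFDeriv_c (b : Fin r → ℝ) (ω0 : LTIdx r → ℝ) (j : Fin r) :
    HasFDerivAt (fun ω => cfun b ω j) (cD b ω0 j) ω0 :=
  HasFDerivAt.fun_sum fun i _ => (hasFDeriv_entry ω0 i j).const_mul (b i)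

end GradAux

open GradAux
/-- **Gradient of `(1/2) log|Ω| − (1/2) bᵀΩb` with respect to the log-Cholesky
parameter `ω`**, where `Ω = WWᵀ`: it equals `D^W v(W^{−T} − b bᵀ W)`, with `D^W` the
diagonal matrix with diagonal `v(J^W)`, `J^W_{ii} = W_{ii}` and off-diagonal entries 1. -/
theorem gradient_logdet_quadratic_logCholesky
    (r : ℕ) (b : Fin r → ℝ) (ω0 : LTIdx r → ℝ) :
    HasFDerivAt
      (fun ω : LTIdx r → ℝ =>
        (1 / 2) * Real.log ((Wof ω * (Wof ω)ᵀ).det)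
          - (1 / 2) * (b ⬝ᵥ ((Wof ω * (Wof ω)ᵀ) *ᵥ b)))
      (dotCLM (fun q : LTIdx r =>
        (if q.1.1 = q.1.2 then Wof ω0 q.1.1 q.1.1 else 1) *
          (((Wof ω0)⁻¹ᵀ - Matrix.vecMulVec b b * Wof ω0) q.1.1 q.1.2)))
      ω0 := by
  classical
  -- rewrite the function
  have hfun : (fun ω : LTIdx r → ℝ =>
        (1 / 2) * Real.log ((Wof ω * (Wof ω)ᵀ).det)
          - (1 / 2) * (b ⬝ᵥ ((Wof ω * (Wof ω)ᵀ) *ᵥ b)))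
      = fun ω : LTIdx r → ℝ =>
        (∑ i, ω (dIdx i)) - (1 / 2) * ∑ j, cfun b ω j * cfun b ω j := by
    funext ω
    rw [quad_eq]
    congr 1
    rw [Matrix.det_mul, Matrix.det_transpose, det_Wof,
      Real.log_mul (Real.exp_ne_zero _) (Real.exp_ne_zero _), Real.log_exp]
    ring
  rw [hfun]
  -- the natural derivative
  have hS : HasFDerivAt (fun ω : LTIdx r → ℝ => ∑ i, ω (dIdx i))
      (∑ i, projQ (dIdx i)) ω0 :=
    HasFDerivAt.fun_sum fun i _ =>
      (projQ (dIdx i)).hasFDerivAt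
  have hQ : HasFDerivAt (fun ω : LTIdx r → ℝ => ∑ j, cfun b ω j * cfun b ω j)
      (∑ j, (cfun b ω0 j • cD b ω0 j + cfun b ω0 j • cD b ω0 j)) ω0 :=
    HasFDerivAt.fun_sum fun j _ => (hasFDeriv_c b ω0 j).mul (hasFDeriv_c b ω0 j)
  have hF := hS.sub (hQ.const_mul (1 / 2 : ℝ))
  have hL : dotCLM (fun q : LTIdx r =>
        (if q.1.1 = q.1.2 then Wof ω0 q.1.1 q.1.1 else 1) *
          (((Wof ω0)⁻¹ᵀ - Matrix.vecMulVec b b * Wof ω0) q.1.1 q.1.2))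
      = (∑ i, projQ (dIdx i))
        - (1 / 2 : ℝ) • (∑ j, (cfun b ω0 j • cD b ω0 j + cfun b ω0 j • cD b ω0 j)) := by
    ext v
    rw [dotCLM_apply]
    simp only [ContinuousLinearMap.sub_apply, ContinuousLinearMap.smul_apply,
      ContinuousLinearMap.sum_apply, ContinuousLinearMap.add_apply,
      projQ_apply, smul_eq_mul, cD]
    rw [dotProduct]
    rw [sum_LTIdx (fun q =>
      (if q.1.1 = q.1.2 then Wof ω0 q.1.1 q.1.1 else 1) *
        (((Wof ω0)⁻¹ᵀ - Matrix.vecMulVec b b * Wof ω0) q.1.1 q.1.2) * v q)]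
    -- rewrite the right-hand side as a double sum too
    have hdiag : ∑ i, v (dIdx i)
        = ∑ i : Fin r, ∑ j : Fin r,
            if h : j ≤ i then (if i = j then v ⟨(i, j), h⟩ else 0) else 0 := by
      refine Finset.sum_congr rfl fun i _ => ?_
      rw [Finset.sum_eq_single i]
      · simp [dIdx]
      · intro j _ hj
        by_cases h : j ≤ i
        · rw [dif_pos h, if_neg (fun hij : i = j => hj hij.symm)]
        · rw [dif_neg h]
      · intro hi; exact absurd (Finset.mem_univ i) hi
    rw [hdiag]
    have hterm : ∀ j : Fin r, cfun b ω0 j * (∑ i : Fin r, b i * (entryD ω0 i j) v)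
          + cfun b ω0 j * (∑ i : Fin r, b i * (entryD ω0 i j) v)
        = ∑ i : Fin r, 2 * (cfun b ω0 j * (b i * (entryD ω0 i j) v)) := by
      intro j
      simp only [Finset.mul_sum, ← Finset.sum_add_distrib]
      refine Finset.sum_congr rfl fun i _ => ?_
      ring
    have hquad : ∑ j : Fin r, (cfun b ω0 j * (∑ i : Fin r, b i * (entryD ω0 i j) v)
          + cfun b ω0 j * (∑ i : Fin r, b i * (entryD ω0 i j) v))
        = ∑ i : Fin r, ∑ j : Fin r,
            2 * (cfun b ω0 j * (b i * (entryD ω0 i j) v)) := by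
      rw [Finset.sum_congr rfl fun j _ => hterm j]
      exact Finset.sum_comm
    rw [hquad, Finset.mul_sum, ← Finset.sum_sub_distrib]
    refine Finset.sum_congr rfl fun i _ => ?_
    rw [Finset.mul_sum, ← Finset.sum_sub_distrib]
    refine Finset.sum_congr rfl fun j _ => ?_
    by_cases h : j ≤ i
    · simp only [dif_pos h, entryD]
      by_cases hij : i = j
      · subst hij
        simp only [if_pos rfl, ContinuousLinearMap.smul_apply,
          projQ_apply, smul_eq_mul, Matrix.sub_apply,
          Matrix.transpose_apply]
        have h1 : (Wof ω0)⁻¹ i i * Wof ω0 i i = 1 := by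
          rw [mul_comm]; exact Winv_mul_diag ω0 i
        have h2 : (Matrix.vecMulVec b b * Wof ω0) i i = b i * cfun b ω0 i := by
          simp only [Matrix.mul_apply, Matrix.vecMulVec_apply, cfun, Finset.mul_sum]
          refine Finset.sum_congr rfl fun k _ => ?_; ring
        rw [h2]
        have he : (⟨(i, i), h⟩ : LTIdx r) = dIdx i := rfl
        rw [he]
        simp only [if_true, ContinuousLinearMap.smul_apply, projQ_apply, smul_eq_mul]
        linear_combination (v (dIdx i)) * h1
      · simp only [if_neg hij, projQ_apply, Matrix.sub_apply,
          Matrix.transpose_apply]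
        have hji : (j : Fin r) < i := lt_of_le_of_ne h (fun e => hij e.symm)
        have h1 : (Wof ω0)⁻¹ j i = 0 :=
          Winv_lower ω0 (show OrderDual.toDual i < OrderDual.toDual j from hji)
        have h2 : (Matrix.vecMulVec b b * Wof ω0) i j = b i * cfun b ω0 j := by
          simp only [Matrix.mul_apply, Matrix.vecMulVec_apply, cfun, Finset.mul_sum]
          refine Finset.sum_congr rfl fun k _ => ?_; ring
        rw [h1, h2]
        ring
    · simp only [dif_neg h, entryD, ContinuousLinearMap.zero_apply]
      ring
  rw [hL]
  exact hF
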